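/- Let $n > 1$, $v \in \{-1,1\}^{n-1}$ with $\sum_k v_k = 0$, and $0 < \gamma < \beta < 1/2$. Define distributions on $n$ points: $P = (\frac{\beta+\gamma\beta v_1}{n-1}, \dots, \frac{\beta+\gamma\beta v_{n-1}}{n-1}, 1-\beta)$ and $Q = (\frac{\beta}{n-1}, \dots, \frac{\beta}{n-1}, 1-\beta)$. Then the Kullback–Leibler divergence satisfies $\mathrm{KL}(P, Q) \le 2\beta\gamma^2$. -/

import Mathlib

/-- KL divergence bound between the perturbed and unperturbed instances:
`KL(P, Q) ≤ 2 β γ²` where `P` puts mass `(β + γ β v_k)/(n-1)` on the first `n-1`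
points and `1-β` on the last, and `Q` puts mass `β/(n-1)` and `1-β`. -/
theorem kl_divergence_perturbed_instance
    (m : ℕ) (hm : 1 ≤ m) (β γ : ℝ) (hγ : 0 < γ) (hγβ : γ < β) (hβ : β < 1/2)
    (v : Fin m → ℝ) (hv : ∀ k, v k = 1 ∨ v k = -1) (hsum : ∑ k, v k = 0)
    (P Q : Fin (m + 1) → ℝ)
    (hP : ∀ i : Fin (m + 1), P i = if h : (i : ℕ) < m then (β + γ * β * v ⟨i, h⟩) / m else 1 - β)
    (hQ : ∀ i : Fin (m + 1), Q i = if (i : ℕ) < m then β / m else 1 - β) :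
    ∑ i, P i * Real.log (P i / Q i) ≤ 2 * β * γ ^ 2 := by
  have hβ0 : 0 < β := hγ.trans hγβ
  have hm0 : (0:ℝ) < m := by exact_mod_cast hm
  have hγ1 : γ < 1 := by linarith
  rw [Fin.sum_univ_castSucc]
  have hlast : P (Fin.last m) * Real.log (P (Fin.last m) / Q (Fin.last m)) = 0 := by
    have h1β : (1:ℝ) - β ≠ 0 := by linarith
    rw [hP, hQ]
    simp [Fin.last, div_self h1β]
  rw [hlast, add_zero]
  have key : ∀ k : Fin m,
      P k.castSucc * Real.log (P k.castSucc / Q k.castSucc)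
        ≤ (β * γ * v k + β * γ ^ 2) / m := by
    intro k
    have hk : ((k.castSucc : Fin (m+1)) : ℕ) < m := k.isLt
    have hPk : P k.castSucc = (β + γ * β * v k) / m := by
      rw [hP]; simp [hk]
    have hQk : Q k.castSucc = β / m := by rw [hQ]; simp [hk]
    have hvk2 : v k * v k = 1 := by rcases hv k with h | h <;> rw [h] <;> ring
    have hvabs : -1 ≤ v k ∧ v k ≤ 1 := by
      rcases hv k with h | h <;> rw [h] <;> constructor <;> norm_num
    have hpos : 0 < 1 + γ * v k := by nlinarith [hvabs.1, hvabs.2]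
    have hPpos : 0 < P k.castSucc := by
      rw [hPk]
      apply div_pos _ hm0
      nlinarith
    have hratio : P k.castSucc / Q k.castSucc = 1 + γ * v k := by
      rw [hPk, hQk]
      field_simp
    have hlog : Real.log (P k.castSucc / Q k.castSucc) ≤ γ * v k := by
      rw [hratio]
      have := Real.log_le_sub_one_of_pos hpos
      linarith
    calc P k.castSucc * Real.log (P k.castSucc / Q k.castSucc)
        ≤ P k.castSucc * (γ * v k) := by
          rcases le_or_gt 0 (γ * v k) with h | h
          · exact mul_le_mul_of_nonneg_left hlog hPpos.le
          · -- γ * v k < 0; still P * log ≤ P * (γ v) since log ≤ γ v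
            exact mul_le_mul_of_nonneg_left hlog hPpos.le
      _ = (β * γ * v k + β * γ ^ 2) / m := by
          rw [hPk]
          field_simp
          linear_combination γ * hvk2
  calc ∑ k : Fin m, P k.castSucc * Real.log (P k.castSucc / Q k.castSucc)
      ≤ ∑ k : Fin m, (β * γ * v k + β * γ ^ 2) / m := Finset.sum_le_sum fun k _ => key k
    _ = β * γ ^ 2 := by
        rw [← Finset.sum_div, Finset.sum_add_distrib, ← Finset.mul_sum, hsum,
          Finset.sum_const, Finset.card_univ, Fintype.card_fin]
        field_simp
        rw [nsmul_eq_mul]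
        ring
    _ ≤ 2 * β * γ ^ 2 := by nlinarith
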